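/- Let H, H′, O be n×n complex matrices with ‖H‖, ‖H′‖, ‖O‖ finite (operator norm). Define Fₙ via F₀ = O, F_{n+1} = [H, Fₙ]; Gₙ via G₀ = O, G_{n+1} = [H + H′, Gₙ]; and H′ₙ := Σ_{l=1}^{n} ad_H^{l-1}([H′, ad_H^{n-l}(O)]). Then ‖Gₙ - Fₙ - H′ₙ‖ ≤ 2ⁿ ‖O‖ · ((‖H‖ + ‖H′‖)ⁿ - ‖H‖ⁿ - n‖H′‖·‖H‖^{n-1}). -/

import Mathlib

set_option synthInstance.maxHeartbeats 1000000
set_option maxHeartbeats 1000000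

open Matrix NormedSpace ComplexOrder

noncomputable def opNorm {n : ℕ} (A : Matrix (Fin n) (Fin n) ℂ) : ℝ :=
  ‖(Matrix.toEuclideanCLM (𝕜 := ℂ) A : EuclideanSpace ℂ (Fin n) →L[ℂ] EuclideanSpace ℂ (Fin n))‖

noncomputable def traceNorm {n : ℕ} (A : Matrix (Fin n) (Fin n) ℂ) : ℝ :=
  (((Matrix.posSemidef_conjTranspose_mul_self A).1.eigenvectorUnitary.1 *
      diagonal (((↑) : ℝ → ℂ) ∘ (√·) ∘ (Matrix.posSemidef_conjTranspose_mul_self A).1.eigenvalues) *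
      (star (Matrix.posSemidef_conjTranspose_mul_self A).1.eigenvectorUnitary : Matrix (Fin n) (Fin n) ℂ)).trace).re

def IsDensity {n : ℕ} (ρ : Matrix (Fin n) (Fin n) ℂ) : Prop := ρ.PosSemidef ∧ ρ.trace = 1

/-- Left adjoint action: ad_H(X) = [H, X]. -/
noncomputable def adL {n : ℕ} (H : Matrix (Fin n) (Fin n) ℂ) : Matrix (Fin n) (Fin n) ℂ → Matrix (Fin n) (Fin n) ℂ :=
  fun X => H * X - X * H

/-- Right-nesting action: X ↦ [X, H]. -/
noncomputable def adR {n : ℕ} (H : Matrix (Fin n) (Fin n) ℂ) : Matrix (Fin n) (Fin n) ℂ → Matrix (Fin n) (Fin n) ℂ :=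
  fun X => X * H - H * X

lemma opNorm_nonneg' {n : ℕ} (A : Matrix (Fin n) (Fin n) ℂ) : 0 ≤ opNorm A := norm_nonneg _

lemma opNorm_zero' {n : ℕ} : opNorm (0 : Matrix (Fin n) (Fin n) ℂ) = 0 := by
  simp [opNorm]

lemma opNorm_add_le' {n : ℕ} (A B : Matrix (Fin n) (Fin n) ℂ) :
    opNorm (A + B) ≤ opNorm A + opNorm B := by
  simpa [opNorm, map_add] using norm_add_le (Matrix.toEuclideanCLM (𝕜 := ℂ) A) (Matrix.toEuclideanCLM (𝕜 := ℂ) B)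

lemma opNorm_mul_le' {n : ℕ} (A B : Matrix (Fin n) (Fin n) ℂ) :
    opNorm (A * B) ≤ opNorm A * opNorm B := by
  simpa [opNorm, _root_.map_mul] using norm_mul_le (Matrix.toEuclideanCLM (𝕜 := ℂ) A) (Matrix.toEuclideanCLM (𝕜 := ℂ) B)

lemma opNorm_comm_le' {n : ℕ} (A X : Matrix (Fin n) (Fin n) ℂ) :
    opNorm (A * X - X * A) ≤ 2 * opNorm A * opNorm X := by
  have h1 : opNorm (A * X - X * A) ≤ opNorm (A * X) + opNorm (X * A) := by
    simpa [opNorm, map_sub] using norm_sub_le (Matrix.toEuclideanCLM (𝕜 := ℂ) (A * X)) (Matrix.toEuclideanCLM (𝕜 := ℂ) (X * A))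
  have h2 := opNorm_mul_le' A X
  have h3 := opNorm_mul_le' X A
  nlinarith [h1, h2, h3]

lemma adL_sum' {n : ℕ} (H : Matrix (Fin n) (Fin n) ℂ) (s : Finset ℕ)
    (f : ℕ → Matrix (Fin n) (Fin n) ℂ) :
    adL H (∑ l ∈ s, f l) = ∑ l ∈ s, adL H (f l) := by
  simp [adL, Finset.mul_sum, Finset.sum_mul, Finset.sum_sub_distrib]

/-- with F₀ = O, F_{k+1} = [H, Fₖ]; G₀ = O, G_{k+1} = [H+H′, Gₖ]; and
H′_N = Σ_{l=1}^{N} ad_H^{l-1}([H′, ad_H^{N-l}(O)]), one has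
‖G_N - F_N - H′_N‖ ≤ 2^N ‖O‖ ((‖H‖+‖H′‖)^N - ‖H‖^N - N‖H′‖‖H‖^{N-1}). -/
theorem stmt11 {n : ℕ} (H H' O : Matrix (Fin n) (Fin n) ℂ) (N : ℕ)
    (F G : ℕ → Matrix (Fin n) (Fin n) ℂ)
    (hF0 : F 0 = O) (hFs : ∀ k, F (k + 1) = H * F k - F k * H)
    (hG0 : G 0 = O) (hGs : ∀ k, G (k + 1) = (H + H') * G k - G k * (H + H')) :
    opNorm (G N - F N -
        ∑ l ∈ Finset.range N,
          (adL H)^[l] (H' * ((adL H)^[N - 1 - l] O) - ((adL H)^[N - 1 - l] O) * H'))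
      ≤ 2 ^ N * opNorm O *
          ((opNorm H + opNorm H') ^ N - opNorm H ^ N
            - N * opNorm H' * opNorm H ^ (N - 1)) := by
  set h := opNorm H with hh
  set h' := opNorm H' with hh'
  set o := opNorm O with ho
  have h0 : 0 ≤ h := opNorm_nonneg' H
  have h'0 : 0 ≤ h' := opNorm_nonneg' H'
  have o0 : 0 ≤ o := opNorm_nonneg' O
  -- F in terms of iterates of adL H
  have hFit : ∀ k, F k = (adL H)^[k] O := by
    intro k
    induction k with
    | zero => simpa using hF0
    | succ k ih => rw [hFs, ih, Function.iterate_succ_apply', adL]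
  -- the sum S
  set S : ℕ → Matrix (Fin n) (Fin n) ℂ := fun N =>
    ∑ l ∈ Finset.range N,
      (adL H)^[l] (H' * ((adL H)^[N - 1 - l] O) - ((adL H)^[N - 1 - l] O) * H') with hS
  -- recursion for S
  have hSrec : ∀ k, S (k + 1) = adL H (S k) + (H' * F k - F k * H') := by
    intro k
    rw [hS]
    simp only
    rw [Finset.sum_range_succ']
    have e0 : (adL H)^[(0:ℕ)] (H' * ((adL H)^[k + 1 - 1 - 0] O) - ((adL H)^[k + 1 - 1 - 0] O) * H')
        = H' * F k - F k * H' := by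
      simp [hFit k]
    rw [e0]
    congr 1
    rw [adL_sum']
    apply Finset.sum_congr rfl
    intro l _
    have hidx : k + 1 - 1 - (l + 1) = k - 1 - l := by omega
    rw [hidx, Function.iterate_succ_apply']
  -- bound on G
  have hGb : ∀ k, opNorm (G k) ≤ (2 * (h + h')) ^ k * o := by
    intro k
    induction k with
    | zero => simpa [hG0, ho] using le_refl o
    | succ k ih =>
      rw [hGs]
      have b1 : opNorm ((H + H') * G k - G k * (H + H')) ≤ 2 * opNorm (H + H') * opNorm (G k) :=
        opNorm_comm_le' (H + H') (G k)
      have b2 : opNorm (H + H') ≤ h + h' := opNorm_add_le' H H'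
      have hGk0 : 0 ≤ opNorm (G k) := opNorm_nonneg' _
      calc opNorm ((H + H') * G k - G k * (H + H'))
          ≤ 2 * opNorm (H + H') * opNorm (G k) := b1
        _ ≤ 2 * (h + h') * ((2 * (h + h')) ^ k * o) := by nlinarith [pow_nonneg (by linarith : (0:ℝ) ≤ 2 * (h + h')) k]
        _ = (2 * (h + h')) ^ (k + 1) * o := by ring
  -- bound on G - F
  have hGFb : ∀ k, opNorm (G k - F k) ≤ 2 ^ k * o * ((h + h') ^ k - h ^ k) := by
    intro k
    induction k with
    | zero => simp [hG0, hF0, opNorm_zero']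
    | succ k ih =>
      have key : G (k + 1) - F (k + 1)
          = (H * (G k - F k) - (G k - F k) * H) + (H' * G k - G k * H') := by
        rw [hGs, hFs]; noncomm_ring
      rw [key]
      have b1 := opNorm_add_le' (H * (G k - F k) - (G k - F k) * H) (H' * G k - G k * H')
      have b2 := opNorm_comm_le' H (G k - F k)
      have b3 : opNorm (H' * G k - G k * H') ≤ 2 * h' * opNorm (G k) := by
        have := opNorm_comm_le' H' (G k); linarith
      have b4 := hGb k
      have hGk0 : 0 ≤ opNorm (G k) := opNorm_nonneg' _
      have hGF0 : 0 ≤ opNorm (G k - F k) := opNorm_nonneg' _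
      have hp : (2 * (h + h')) ^ k = 2 ^ k * (h + h') ^ k := mul_pow 2 (h + h') k
      calc opNorm ((H * (G k - F k) - (G k - F k) * H) + (H' * G k - G k * H'))
          ≤ 2 * h * opNorm (G k - F k) + 2 * h' * opNorm (G k) := by linarith
        _ ≤ 2 * h * (2 ^ k * o * ((h + h') ^ k - h ^ k)) + 2 * h' * ((2 * (h + h')) ^ k * o) := by nlinarith
        _ = 2 ^ (k + 1) * o * ((h + h') ^ (k + 1) - h ^ (k + 1)) := by rw [hp]; ring
  -- main induction
  have main : ∀ k, opNorm (G k - F k - S k)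
      ≤ 2 ^ k * o * ((h + h') ^ k - h ^ k - k * h' * h ^ (k - 1)) := by
    intro k
    induction k with
    | zero => simp [hS, hG0, hF0, opNorm_zero']
    | succ k ih =>
      have key : G (k + 1) - F (k + 1) - S (k + 1)
          = (H * (G k - F k - S k) - (G k - F k - S k) * H)
            + (H' * (G k - F k) - (G k - F k) * H') := by
        rw [hGs, hFs, hSrec, adL]; noncomm_ring
      rw [key]
      have b1 := opNorm_add_le' (H * (G k - F k - S k) - (G k - F k - S k) * H)
        (H' * (G k - F k) - (G k - F k) * H')
      have b2 := opNorm_comm_le' H (G k - F k - S k)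
      have b3 := opNorm_comm_le' H' (G k - F k)
      have b4 := hGFb k
      have hD0 : 0 ≤ opNorm (G k - F k - S k) := opNorm_nonneg' _
      have hGF0 : 0 ≤ opNorm (G k - F k) := opNorm_nonneg' _
      have step : opNorm ((H * (G k - F k - S k) - (G k - F k - S k) * H)
            + (H' * (G k - F k) - (G k - F k) * H'))
          ≤ 2 * h * (2 ^ k * o * ((h + h') ^ k - h ^ k - k * h' * h ^ (k - 1)))
            + 2 * h' * (2 ^ k * o * ((h + h') ^ k - h ^ k)) := by nlinarith
      refine step.trans (le_of_eq ?_)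
      cases k with
      | zero => norm_num
      | succ m =>
        have : (m + 1 + 1 : ℕ) - 1 = m + 1 := rfl
        rw [this]
        have : (m + 1 : ℕ) - 1 = m := rfl
        rw [this]
        push_cast
        ring
  have := main N
  simpa [hS] using this
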